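/- Let ℓ ≥ 1 be an integer, a, ρ > 0 and λ > 0, and set μ = √(λ² + a²). Assume J_ℓ′(μρ) ≠ 0, set A_ℓ = −(λ/μ)·J_ℓ(μρ)/J_ℓ′(μρ), and assume (J_ℓ(λρ) + A_ℓJ_ℓ′(λρ))² + (Y_ℓ(λρ) + A_ℓY_ℓ′(λρ))² ≠ 0. Then −(a²/μ²)·(2/(π²λ))·(1 − (ℓ²/(λρ)²)·A_ℓ²) / ( (J_ℓ(λρ) + A_ℓJ_ℓ′(λρ))² + (Y_ℓ(λρ) + A_ℓY_ℓ′(λρ))² ) = (2a²/(π²λ))·J_{ℓ−1}(μρ)·J_{ℓ+1}(μρ) / D_ℓ(λ), where D_ℓ(λ) = (μJ_{ℓ−1}(μρ)J_ℓ(λρ) − λJ_ℓ(μρ)J_{ℓ−1}(λρ))² + (μJ_{ℓ−1}(μρ)Y_ℓ(λρ) − λJ_ℓ(μρ)Y_{ℓ−1}(λρ))². -/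

import Mathlib

open scoped Real Topology
open Filter Asymptotics

noncomputable def eulerGamma : ℝ := -deriv Real.Gamma 1

noncomputable def harm (m : ℕ) : ℝ := ∑ j ∈ Finset.range m, (1 : ℝ)/(j+1)

noncomputable def besselJr (ℓ : ℕ) (x : ℝ) : ℝ :=
  ∑' k : ℕ, ((-1 : ℝ)^k / ((Nat.factorial k : ℝ) * (Nat.factorial (k + ℓ) : ℝ))) * (x/2)^(2*k + ℓ)

noncomputable def besselYr (ℓ : ℕ) (x : ℝ) : ℝ :=
  (2/Real.pi) * (Real.log (x/2) + eulerGamma) * besselJr ℓ x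
  - (1/Real.pi) * ∑ k ∈ Finset.range ℓ,
      ((Nat.factorial (ℓ - k - 1) : ℝ) / (Nat.factorial k : ℝ)) * (x/2)^(2*(k:ℤ) - (ℓ:ℤ))
  - (1/Real.pi) * ∑' k : ℕ,
      ((-1:ℝ)^k * (harm k + harm (k+ℓ)) / ((Nat.factorial k : ℝ) * (Nat.factorial (k+ℓ) : ℝ))) * (x/2)^(2*k+ℓ)

noncomputable def besselJn (ℓ : ℕ) (z : ℂ) : ℂ :=
  ∑' k : ℕ, ((-1 : ℂ)^k / ((Nat.factorial k : ℂ) * (Nat.factorial (k + ℓ) : ℂ))) * (z/2)^(2*k + ℓ)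

noncomputable def besselJZ (ℓ : ℤ) (z : ℂ) : ℂ :=
  if 0 ≤ ℓ then besselJn ℓ.toNat z else (-1 : ℂ)^((-ℓ).toNat) * besselJn (-ℓ).toNat z

noncomputable def besselYn (ℓ : ℕ) (z : ℂ) : ℂ :=
  (2/(Real.pi : ℂ)) * (Complex.log (z/2) + (eulerGamma : ℂ)) * besselJn ℓ z
  - (1/(Real.pi : ℂ)) * ∑ k ∈ Finset.range ℓ,
      ((Nat.factorial (ℓ - k - 1) : ℂ) / (Nat.factorial k : ℂ)) * (z/2)^(2*(k:ℤ) - (ℓ:ℤ))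
  - (1/(Real.pi : ℂ)) * ∑' k : ℕ,
      ((-1:ℂ)^k * ((harm k : ℝ) + (harm (k+ℓ) : ℝ)) / ((Nat.factorial k : ℂ) * (Nat.factorial (k+ℓ) : ℂ))) * (z/2)^(2*k+ℓ)

noncomputable def besselYZ (ℓ : ℤ) (z : ℂ) : ℂ :=
  if 0 ≤ ℓ then besselYn ℓ.toNat z else (-1 : ℂ)^((-ℓ).toNat) * besselYn (-ℓ).toNat z

noncomputable def hankelH1 (ℓ : ℤ) (z : ℂ) : ℂ := besselJZ ℓ z + Complex.I * besselYZ ℓ z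

noncomputable def hankelH1n (ℓ : ℕ) (z : ℂ) : ℂ := besselJn ℓ z + Complex.I * besselYn ℓ z
noncomputable def hankelH2n (ℓ : ℕ) (z : ℂ) : ℂ := besselJn ℓ z - Complex.I * besselYn ℓ z

noncomputable def muC (a : ℝ) (lam : ℂ) : ℂ := (lam^2 + (a:ℂ)^2) ^ ((1:ℂ)/2)

noncomputable def Qfun (ρ : ℝ) (ℓ : ℤ) (lam : ℂ) (a : ℝ) : ℂ :=
  muC a lam * besselJZ (ℓ-1) ((ρ:ℂ) * muC a lam) * hankelH1 ℓ (lam * (ρ:ℂ))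
  - lam * besselJZ ℓ ((ρ:ℂ) * muC a lam) * hankelH1 (ℓ-1) (lam * (ρ:ℂ))

noncomputable def Dfun (a ρ : ℝ) (ℓ : ℕ) (lam : ℝ) : ℝ :=
  (Real.sqrt (lam^2+a^2) * besselJr (ℓ-1) (Real.sqrt (lam^2+a^2)*ρ) * besselJr ℓ (lam*ρ)
    - lam * besselJr ℓ (Real.sqrt (lam^2+a^2)*ρ) * besselJr (ℓ-1) (lam*ρ))^2
  + (Real.sqrt (lam^2+a^2) * besselJr (ℓ-1) (Real.sqrt (lam^2+a^2)*ρ) * besselYr ℓ (lam*ρ)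
    - lam * besselJr ℓ (Real.sqrt (lam^2+a^2)*ρ) * besselYr (ℓ-1) (lam*ρ))^2

noncomputable def Ffun (a ρ : ℝ) (ℓ : ℕ) (lam : ℝ) : ℝ :=
  (2*a^2/(Real.pi^2*lam)) * besselJr (ℓ-1) (Real.sqrt (lam^2+a^2)*ρ)
    * besselJr (ℓ+1) (Real.sqrt (lam^2+a^2)*ρ) / Dfun a ρ ℓ lam

noncomputable def D0fun (a ρ : ℝ) (lam : ℝ) : ℝ :=
  (Real.sqrt (lam^2+a^2) * besselJr 1 (Real.sqrt (lam^2+a^2)*ρ) * besselJr 0 (lam*ρ)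
    - lam * besselJr 0 (Real.sqrt (lam^2+a^2)*ρ) * besselJr 1 (lam*ρ))^2
  + (Real.sqrt (lam^2+a^2) * besselJr 1 (Real.sqrt (lam^2+a^2)*ρ) * besselYr 0 (lam*ρ)
    - lam * besselJr 0 (Real.sqrt (lam^2+a^2)*ρ) * besselYr 1 (lam*ρ))^2

noncomputable def F0fun (a ρ : ℝ) (lam : ℝ) : ℝ :=
  -(2*a^2/(Real.pi^2*lam)) * (besselJr 1 (Real.sqrt (lam^2+a^2)*ρ))^2 / D0fun a ρ lam

noncomputable def jt (ℓ k : ℕ) (x : ℝ) : ℝ :=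
  ((-1 : ℝ)^k / ((Nat.factorial k : ℝ) * (Nat.factorial (k + ℓ) : ℝ))) * (x/2)^(2*k + ℓ)

noncomputable def jdt (ℓ k : ℕ) (x : ℝ) : ℝ :=
  ((-1 : ℝ)^k / ((Nat.factorial k : ℝ) * (Nat.factorial (k + ℓ) : ℝ))) *
    (((2*k+ℓ : ℕ) : ℝ) * (x/2)^(2*k + ℓ - 1) * (1/2))

noncomputable def yt (ℓ k : ℕ) (x : ℝ) : ℝ :=
  ((-1:ℝ)^k * (harm k + harm (k+ℓ)) / ((Nat.factorial k : ℝ) * (Nat.factorial (k+ℓ) : ℝ))) * (x/2)^(2*k+ℓ)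

noncomputable def ydt (ℓ k : ℕ) (x : ℝ) : ℝ :=
  ((-1:ℝ)^k * (harm k + harm (k+ℓ)) / ((Nat.factorial k : ℝ) * (Nat.factorial (k+ℓ) : ℝ))) *
    (((2*k+ℓ : ℕ) : ℝ) * (x/2)^(2*k + ℓ - 1) * (1/2))

lemma besselJr_eq (ℓ : ℕ) (x : ℝ) : besselJr ℓ x = ∑' k, jt ℓ k x := rfl

lemma harm_nonneg (m : ℕ) : 0 ≤ harm m := Finset.sum_nonneg (fun j _ => by positivity)

lemma harm_le (m : ℕ) : harm m ≤ m := by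
  have : ∀ j ∈ Finset.range m, (1:ℝ)/(j+1) ≤ 1 := by
    intro j _
    rw [div_le_one (by positivity)]
    linarith [Nat.cast_nonneg (α := ℝ) j]
  calc harm m ≤ ∑ j ∈ Finset.range m, (1:ℝ) := Finset.sum_le_sum this
    _ = m := by simp

lemma summable_CM (C M : ℝ) : Summable (fun k : ℕ => C * M^k / (Nat.factorial k : ℝ)) := by
  simpa [mul_div_assoc] using (Real.summable_pow_div_factorial M).mul_left C

lemma summable_of_bound {f : ℕ → ℝ} (C M : ℝ)
    (h : ∀ k, |f k| ≤ C * M^k / (Nat.factorial k : ℝ)) : Summable f :=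
  Summable.of_norm_bounded (summable_CM C M) (by simpa using h)

lemma one_le_fact (m : ℕ) : (1:ℝ) ≤ (Nat.factorial m : ℝ) := by
  exact_mod_cast Nat.one_le_iff_ne_zero.mpr (Nat.factorial_ne_zero m)

lemma sq_add_one_le (n : ℕ) : ((n:ℝ)^2 + 1) ≤ 4^n := by
  have h2 : ((n:ℝ)+1) ≤ 2^n := by exact_mod_cast (Nat.lt_two_pow_self : n < 2 ^ n)
  have h4 : (4:ℝ)^n = (2^n)^2 := by
    rw [← pow_mul, mul_comm, pow_mul]; norm_num
  nlinarith [Nat.cast_nonneg (α := ℝ) n]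

lemma core_bound (ℓ k m : ℕ) (hm : m ≤ 2*k+ℓ) (c x R : ℝ)
    (hc : |c| ≤ (((2*k+ℓ : ℕ)):ℝ)^2 + 1) (hx : |x| ≤ R) :
    |c / ((Nat.factorial k : ℝ) * (Nat.factorial (k+ℓ) : ℝ)) * (x/2)^m|
      ≤ (4*max 1 R)^ℓ * ((4*max 1 R)^2)^k / (Nat.factorial k : ℝ) := by
  set M := max 1 R with hMdef
  have hM1 : (1:ℝ) ≤ M := le_max_left _ _
  have hxM : |x/2| ≤ M := by
    rw [abs_div, abs_two]
    rw [div_le_iff₀ (by norm_num)]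
    calc |x| ≤ R := hx
      _ ≤ M := le_max_right _ _
      _ ≤ M * 2 := by linarith
  set n := 2*k+ℓ with hn
  have hfk : (0:ℝ) < (Nat.factorial k : ℝ) := by positivity
  have hfkl : (1:ℝ) ≤ (Nat.factorial (k+ℓ) : ℝ) := one_le_fact _
  have step1 : |c / ((Nat.factorial k : ℝ) * (Nat.factorial (k+ℓ) : ℝ)) * (x/2)^m|
      ≤ (((n:ℕ):ℝ)^2 + 1) * M^n / (Nat.factorial k : ℝ) := by
    rw [abs_mul, abs_div, abs_mul, Nat.abs_cast, Nat.abs_cast, abs_pow]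
    have h1 : |x/2|^m ≤ M^n :=
      le_trans (pow_le_pow_left₀ (abs_nonneg _) hxM m) (pow_le_pow_right₀ hM1 hm)
    have h2 : |c| / ((Nat.factorial k : ℝ) * (Nat.factorial (k+ℓ) : ℝ))
        ≤ (((n:ℕ):ℝ)^2 + 1) / (Nat.factorial k : ℝ) := by
      apply div_le_div₀ (by positivity) hc (by positivity)
      nlinarith
    calc |c| / ((Nat.factorial k : ℝ) * (Nat.factorial (k+ℓ) : ℝ)) * |x/2|^m
        ≤ ((((n:ℕ):ℝ)^2 + 1) / (Nat.factorial k : ℝ)) * M^n := by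
          apply mul_le_mul h2 h1 (by positivity) (by positivity)
      _ = (((n:ℕ):ℝ)^2 + 1) * M^n / (Nat.factorial k : ℝ) := by ring
  refine step1.trans ?_
  have h3 : (((n:ℕ):ℝ)^2 + 1) * M^n ≤ (4*M)^ℓ * ((4*M)^2)^k := by
    have : (4*M)^ℓ * ((4*M)^2)^k = 4^n * M^n := by
      rw [← pow_mul, ← pow_add, hn, mul_pow]; ring_nf
    rw [this]
    apply mul_le_mul (sq_add_one_le n) le_rfl (by positivity) (by positivity)
  gcongr

lemma jt_bound (ℓ k : ℕ) (x R : ℝ) (hx : |x| ≤ R) :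
    |jt ℓ k x| ≤ (4*max 1 R)^ℓ * ((4*max 1 R)^2)^k / (Nat.factorial k : ℝ) := by
  apply core_bound ℓ k (2*k+ℓ) le_rfl _ x R _ hx
  rw [abs_pow, abs_neg, abs_one, one_pow]
  nlinarith [Nat.cast_nonneg (α := ℝ) (2*k+ℓ)]

lemma jdt_bound (ℓ k : ℕ) (x R : ℝ) (hx : |x| ≤ R) :
    |jdt ℓ k x| ≤ (4*max 1 R)^ℓ * ((4*max 1 R)^2)^k / (Nat.factorial k : ℝ) := by
  have : jdt ℓ k x = ((-1:ℝ)^k * ((2*k+ℓ : ℕ) : ℝ) * (1/2)) /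
      ((Nat.factorial k : ℝ) * (Nat.factorial (k+ℓ) : ℝ)) * (x/2)^(2*k+ℓ-1) := by
    rw [jdt]; ring
  rw [this]
  apply core_bound ℓ k _ (Nat.sub_le _ _) _ x R _ hx
  rw [abs_mul, abs_mul, abs_pow, abs_neg, abs_one, one_pow, one_mul, Nat.abs_cast]
  rw [abs_of_nonneg (by norm_num : (0:ℝ) ≤ (1:ℝ)/2)]
  nlinarith [Nat.cast_nonneg (α := ℝ) (2*k+ℓ)]

lemma harm_abs_le (ℓ k : ℕ) : |harm k + harm (k+ℓ)| ≤ (((2*k+ℓ : ℕ)):ℝ) := by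
  have h1 := harm_nonneg k
  have h2 := harm_nonneg (k+ℓ)
  rw [abs_of_nonneg (by linarith)]
  have := harm_le k
  have := harm_le (k+ℓ)
  push_cast at *
  linarith

lemma yt_bound (ℓ k : ℕ) (x R : ℝ) (hx : |x| ≤ R) :
    |yt ℓ k x| ≤ (4*max 1 R)^ℓ * ((4*max 1 R)^2)^k / (Nat.factorial k : ℝ) := by
  apply core_bound ℓ k (2*k+ℓ) le_rfl _ x R _ hx
  rw [abs_mul, abs_pow, abs_neg, abs_one, one_pow, one_mul]
  have := harm_abs_le ℓ k
  nlinarith [abs_nonneg (harm k + harm (k+ℓ)), Nat.cast_nonneg (α := ℝ) (2*k+ℓ)]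

lemma ydt_bound (ℓ k : ℕ) (x R : ℝ) (hx : |x| ≤ R) :
    |ydt ℓ k x| ≤ (4*max 1 R)^ℓ * ((4*max 1 R)^2)^k / (Nat.factorial k : ℝ) := by
  have : ydt ℓ k x = ((-1:ℝ)^k * (harm k + harm (k+ℓ)) * ((2*k+ℓ : ℕ) : ℝ) * (1/2)) /
      ((Nat.factorial k : ℝ) * (Nat.factorial (k+ℓ) : ℝ)) * (x/2)^(2*k+ℓ-1) := by
    rw [ydt]; ring
  rw [this]
  apply core_bound ℓ k _ (Nat.sub_le _ _) _ x R _ hx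
  rw [abs_mul, abs_mul, abs_mul, abs_pow, abs_neg, abs_one, one_pow, one_mul, Nat.abs_cast]
  rw [abs_of_nonneg (by norm_num : (0:ℝ) ≤ (1:ℝ)/2)]
  have := harm_abs_le ℓ k
  nlinarith [abs_nonneg (harm k + harm (k+ℓ)), Nat.cast_nonneg (α := ℝ) (2*k+ℓ)]

lemma summable_jt (ℓ : ℕ) (x : ℝ) : Summable (fun k => jt ℓ k x) :=
  summable_of_bound _ _ (fun k => jt_bound ℓ k x |x| le_rfl)

lemma summable_jdt (ℓ : ℕ) (x : ℝ) : Summable (fun k => jdt ℓ k x) :=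
  summable_of_bound _ _ (fun k => jdt_bound ℓ k x |x| le_rfl)

lemma summable_yt (ℓ : ℕ) (x : ℝ) : Summable (fun k => yt ℓ k x) :=
  summable_of_bound _ _ (fun k => yt_bound ℓ k x |x| le_rfl)

lemma summable_ydt (ℓ : ℕ) (x : ℝ) : Summable (fun k => ydt ℓ k x) :=
  summable_of_bound _ _ (fun k => ydt_bound ℓ k x |x| le_rfl)

lemma hasDerivAt_jt (ℓ k : ℕ) (x : ℝ) : HasDerivAt (fun z => jt ℓ k z) (jdt ℓ k x) x := by
  have h := (((hasDerivAt_id x).div_const 2).pow (2*k+ℓ)).const_mul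
    ((-1 : ℝ)^k / ((Nat.factorial k : ℝ) * (Nat.factorial (k + ℓ) : ℝ)))
  simpa [jt, jdt] using h

lemma hasDerivAt_yt (ℓ k : ℕ) (x : ℝ) : HasDerivAt (fun z => yt ℓ k z) (ydt ℓ k x) x := by
  have h := (((hasDerivAt_id x).div_const 2).pow (2*k+ℓ)).const_mul
    ((-1:ℝ)^k * (harm k + harm (k+ℓ)) / ((Nat.factorial k : ℝ) * (Nat.factorial (k+ℓ) : ℝ)))
  simpa [yt, ydt] using h

lemma mem_ball_self_abs (x : ℝ) : x ∈ Metric.ball (0:ℝ) (|x|+1) := by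
  simp only [Metric.mem_ball, Real.dist_eq, sub_zero]
  linarith [abs_nonneg x]

lemma hasDerivAt_besselJr (ℓ : ℕ) (x : ℝ) :
    HasDerivAt (besselJr ℓ) (∑' k, jdt ℓ k x) x := by
  refine hasDerivAt_tsum_of_isPreconnected
    (u := fun k => (4*max 1 (|x|+1))^ℓ * ((4*max 1 (|x|+1))^2)^k / (Nat.factorial k : ℝ))
    ?_ Metric.isOpen_ball (convex_ball (0:ℝ) (|x|+1)).isPreconnected
    (fun k y _ => hasDerivAt_jt ℓ k y) ?_ (mem_ball_self_abs x) (summable_jt ℓ x)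
    (mem_ball_self_abs x)
  · refine summable_of_bound ((4*max 1 (|x|+1))^ℓ) ((4*max 1 (|x|+1))^2) (fun k => ?_)
    rw [abs_of_nonneg (by positivity)]
  · intro k y hy
    rw [Real.norm_eq_abs]
    refine jdt_bound ℓ k y (|x|+1) ?_
    simp only [Metric.mem_ball, Real.dist_eq, sub_zero] at hy
    exact hy.le

lemma deriv_besselJr (ℓ : ℕ) (x : ℝ) : deriv (besselJr ℓ) x = ∑' k, jdt ℓ k x :=
  (hasDerivAt_besselJr ℓ x).deriv

lemma jt_rec1 (n k : ℕ) (x : ℝ) (hx : x ≠ 0) :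
    jdt (n+1) k x = jt n k x - ((n+1:ℝ)/x) * jt (n+1) k x := by
  simp only [jt, jdt]
  rw [show 2*k+(n+1)-1 = 2*k+n from by omega,
      show 2*k+(n+1) = (2*k+n)+1 from by omega,
      show k+(n+1) = (k+n)+1 from by omega,
      pow_succ, Nat.factorial_succ]
  have hf1 : ((Nat.factorial k : ℝ)) ≠ 0 := by positivity
  have hf2 : ((Nat.factorial (k+n) : ℝ)) ≠ 0 := by positivity
  push_cast
  field_simp
  ring

lemma jt_rec2_aux (n k : ℕ) (x : ℝ) (hx : x ≠ 0) :
    jdt (n+1) (k+1) x - ((n+1:ℝ)/x) * jt (n+1) (k+1) x = - jt (n+2) k x := by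
  simp only [jt, jdt]
  rw [show 2*(k+1)+(n+1)-1 = 2*k+(n+2) from by omega,
      show 2*(k+1)+(n+1) = (2*k+(n+2))+1 from by omega,
      show (k+1)+(n+1) = k+(n+2) from by omega,
      Nat.factorial_succ k]
  rw [pow_succ (x/2), pow_succ (-1:ℝ)]
  have hf1 : ((Nat.factorial k : ℝ)) ≠ 0 := by positivity
  have hf2 : ((Nat.factorial (k+(n+2)) : ℝ)) ≠ 0 := by positivity
  push_cast
  field_simp
  ring

lemma jt_rec2_zero (n : ℕ) (x : ℝ) (hx : x ≠ 0) :
    jdt (n+1) 0 x - ((n+1:ℝ)/x) * jt (n+1) 0 x = 0 := by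
  simp only [jt, jdt]
  rw [show 2*0+(n+1)-1 = n from by omega, show 2*0+(n+1) = n+1 from by omega,
      pow_succ (x/2)]
  have hf2 : ((Nat.factorial (n+1) : ℝ)) ≠ 0 := by positivity
  push_cast
  field_simp
  ring

lemma deriv_besselJr_rec1 (n : ℕ) (x : ℝ) (hx : x ≠ 0) :
    deriv (besselJr (n+1)) x = besselJr n x - ((n+1:ℝ)/x) * besselJr (n+1) x := by
  rw [deriv_besselJr, besselJr_eq, besselJr_eq, ← tsum_mul_left,
    ← Summable.tsum_sub (summable_jt n x) ((summable_jt (n+1) x).mul_left _)]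
  exact tsum_congr (fun k => jt_rec1 n k x hx)

lemma deriv_besselJr_rec2 (n : ℕ) (x : ℝ) (hx : x ≠ 0) :
    deriv (besselJr (n+1)) x = ((n+1:ℝ)/x) * besselJr (n+1) x - besselJr (n+2) x := by
  have hsum : Summable (fun k => jdt (n+1) k x - ((n+1:ℝ)/x) * jt (n+1) k x) :=
    (summable_jdt _ x).sub ((summable_jt _ x).mul_left _)
  have key : ∑' k, (jdt (n+1) k x - ((n+1:ℝ)/x) * jt (n+1) k x) = - besselJr (n+2) x := by
    rw [Summable.tsum_eq_zero_add hsum, jt_rec2_zero n x hx, zero_add, besselJr_eq]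
    calc ∑' k, (jdt (n+1) (k+1) x - ((n+1:ℝ)/x) * jt (n+1) (k+1) x)
        = ∑' k, - jt (n+2) k x := tsum_congr (fun k => jt_rec2_aux n k x hx)
      _ = - ∑' k, jt (n+2) k x := tsum_neg
  have h2 : ∑' k, (jdt (n+1) k x - ((n+1:ℝ)/x) * jt (n+1) k x)
      = (∑' k, jdt (n+1) k x) - ((n+1:ℝ)/x) * ∑' k, jt (n+1) k x := by
    rw [Summable.tsum_sub (summable_jdt _ x) ((summable_jt _ x).mul_left _), tsum_mul_left]
  rw [deriv_besselJr, besselJr_eq, besselJr_eq]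
  rw [besselJr_eq] at key
  have := key.symm.trans h2
  linarith

noncomputable def Psum (ℓ : ℕ) (x : ℝ) : ℝ :=
  ∑ k ∈ Finset.range ℓ,
    ((Nat.factorial (ℓ - k - 1) : ℝ) / (Nat.factorial k : ℝ)) * (x/2)^(2*(k:ℤ) - (ℓ:ℤ))

noncomputable def Pd (ℓ : ℕ) (x : ℝ) : ℝ :=
  ∑ k ∈ Finset.range ℓ,
    ((Nat.factorial (ℓ - k - 1) : ℝ) / (Nat.factorial k : ℝ)) *
      (((2*(k:ℤ) - (ℓ:ℤ) : ℤ) : ℝ) * (x/2)^(2*(k:ℤ) - (ℓ:ℤ) - 1) * (1 / 2))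

lemma besselYr_eq (ℓ : ℕ) (x : ℝ) :
    besselYr ℓ x = (2/Real.pi) * (Real.log (x/2) + eulerGamma) * besselJr ℓ x
      - (1/Real.pi) * Psum ℓ x - (1/Real.pi) * ∑' k, yt ℓ k x := rfl

lemma hasDerivAt_Ysum (ℓ : ℕ) (x : ℝ) :
    HasDerivAt (fun z => ∑' k, yt ℓ k z) (∑' k, ydt ℓ k x) x := by
  refine hasDerivAt_tsum_of_isPreconnected
    (u := fun k => (4*max 1 (|x|+1))^ℓ * ((4*max 1 (|x|+1))^2)^k / (Nat.factorial k : ℝ))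
    ?_ Metric.isOpen_ball (convex_ball (0:ℝ) (|x|+1)).isPreconnected
    (fun k y _ => hasDerivAt_yt ℓ k y) ?_ (mem_ball_self_abs x) (summable_yt ℓ x)
    (mem_ball_self_abs x)
  · refine summable_of_bound ((4*max 1 (|x|+1))^ℓ) ((4*max 1 (|x|+1))^2) (fun k => ?_)
    rw [abs_of_nonneg (by positivity)]
  · intro k y hy
    rw [Real.norm_eq_abs]
    refine ydt_bound ℓ k y (|x|+1) ?_
    simp only [Metric.mem_ball, Real.dist_eq, sub_zero] at hy
    exact hy.le

lemma hasDerivAt_half (x : ℝ) : HasDerivAt (fun z : ℝ => z/2) (1/2 : ℝ) x := by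
  simpa using (hasDerivAt_id x).div_const 2

lemma hasDerivAt_logterm (x : ℝ) (hx : x ≠ 0) :
    HasDerivAt (fun z => Real.log (z/2) + eulerGamma) (1/x) x := by
  have h := (Real.hasDerivAt_log (by simpa using hx : x/2 ≠ 0)).comp x (hasDerivAt_half x)
  have heq : (x/2)⁻¹ * (1/2) = 1/x := by
    rw [inv_div]
    field_simp
  rw [← heq]
  exact (HasDerivAt.congr_deriv (h.add_const eulerGamma) rfl)

lemma hasDerivAt_Psum (ℓ : ℕ) (x : ℝ) (hx : x ≠ 0) :
    HasDerivAt (fun z => Psum ℓ z) (Pd ℓ x) x := by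
  unfold Psum Pd
  apply HasDerivAt.fun_sum
  intro k _
  have h2 : x/2 ≠ 0 := by simpa using hx
  have h := (((hasDerivAt_zpow (2*(k:ℤ) - (ℓ:ℤ)) (x/2) (Or.inl h2)).comp x
      (hasDerivAt_half x)).const_mul
    ((Nat.factorial (ℓ - k - 1) : ℝ) / (Nat.factorial k : ℝ)))
  exact h

lemma hasDerivAt_besselYr (ℓ : ℕ) (x : ℝ) (hx : 0 < x) :
    HasDerivAt (besselYr ℓ)
      ((2/Real.pi) * ((1/x) * besselJr ℓ x
          + (Real.log (x/2) + eulerGamma) * deriv (besselJr ℓ) x)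
        - (1/Real.pi) * Pd ℓ x - (1/Real.pi) * ∑' k, ydt ℓ k x) x := by
  have h1 : HasDerivAt (fun z => (2/Real.pi) * ((Real.log (z/2) + eulerGamma) * besselJr ℓ z))
      ((2/Real.pi) * ((1/x) * besselJr ℓ x
        + (Real.log (x/2) + eulerGamma) * deriv (besselJr ℓ) x)) x := by
    exact ((hasDerivAt_logterm x hx.ne').mul (hasDerivAt_besselJr ℓ x)).const_mul _ |>.congr_deriv
      (by rw [deriv_besselJr])
  have h2 := (hasDerivAt_Psum ℓ x hx.ne').const_mul (1/Real.pi)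
  have h3 := (hasDerivAt_Ysum ℓ x).const_mul (1/Real.pi)
  have h := (h1.sub h2).sub h3
  refine HasDerivAt.congr_of_eventuallyEq h ?_
  filter_upwards [] with z
  rw [besselYr_eq]
  simp only [Pi.sub_apply]
  ring

lemma zpow_comb (c w : ℝ) (m : ℤ) (x : ℝ) (hx : x ≠ 0) :
    c * ((m:ℝ) * (x/2)^(m-1) * (1/2)) + (w/x) * (c * (x/2)^m)
      = c * (((m:ℝ) + w)/2) * (x/2)^(m-1) := by
  have h2 : (x/2) ≠ 0 := by simpa using hx
  rw [zpow_sub_one₀ h2]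
  field_simp

lemma Psum_rec (n : ℕ) (x : ℝ) (hx : x ≠ 0) :
    Pd (n+1) x + ((n+1:ℝ)/x) * Psum (n+1) x = Psum n x := by
  have h2 : (x/2) ≠ 0 := by simpa using hx
  unfold Pd Psum
  rw [Finset.mul_sum, ← Finset.sum_add_distrib]
  have step1 : ∀ k ∈ Finset.range (n+1),
      ((Nat.factorial (n+1-k-1) : ℝ) / (Nat.factorial k : ℝ)) *
        (((2*(k:ℤ) - ((n+1:ℕ):ℤ) : ℤ) : ℝ) * (x/2)^(2*(k:ℤ) - ((n+1:ℕ):ℤ) - 1) * (1/2))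
      + ((n+1:ℝ)/x) * (((Nat.factorial (n+1-k-1) : ℝ) / (Nat.factorial k : ℝ)) *
          (x/2)^(2*(k:ℤ) - ((n+1:ℕ):ℤ)))
      = ((Nat.factorial (n+1-k-1) : ℝ) / (Nat.factorial k : ℝ)) * (k:ℝ) *
          (x/2)^(2*(k:ℤ) - ((n+1:ℕ):ℤ) - 1) := by
    intro k _
    rw [zpow_comb _ _ _ _ hx]
    have : ((2*(k:ℤ) - ((n+1:ℕ):ℤ) : ℤ) : ℝ) + ((n:ℝ)+1) = 2*(k:ℝ) := by push_cast; ring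
    rw [this]
    ring
  rw [Finset.sum_congr rfl step1, Finset.sum_range_succ']
  have h0 : ((Nat.factorial (n+1-0-1) : ℝ) / (Nat.factorial 0 : ℝ)) * ((0:ℕ):ℝ) *
      (x/2)^(2*((0:ℕ):ℤ) - ((n+1:ℕ):ℤ) - 1) = 0 := by
    simp
  rw [h0, add_zero]
  apply Finset.sum_congr rfl
  intro k hk
  have e1 : n+1-(k+1)-1 = n-k-1 := by omega
  have e2 : (2*(((k+1):ℕ):ℤ) - ((n+1:ℕ):ℤ) - 1) = 2*(k:ℤ) - (n:ℤ) := by push_cast; ring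
  rw [e1, e2, Nat.factorial_succ]
  have hf1 : ((Nat.factorial k : ℝ)) ≠ 0 := by positivity
  push_cast
  field_simp

lemma harm_succ (m : ℕ) : harm (m+1) = harm m + 1/((m:ℝ)+1) := by
  unfold harm; rw [Finset.sum_range_succ]

lemma yt_rec (n k : ℕ) (x : ℝ) (hx : x ≠ 0) :
    ydt (n+1) k x + ((n+1:ℝ)/x) * yt (n+1) k x = yt n k x + (2/x) * jt (n+1) k x := by
  simp only [yt, ydt, jt]
  rw [show k+(n+1) = (k+n)+1 from by omega,
      show 2*k+(n+1)-1 = 2*k+n from by omega,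
      show 2*k+(n+1) = (2*k+n)+1 from by omega,
      harm_succ, Nat.factorial_succ, pow_succ (x/2)]
  have hf1 : ((Nat.factorial k : ℝ)) ≠ 0 := by positivity
  have hf2 : ((Nat.factorial (k+n) : ℝ)) ≠ 0 := by positivity
  have hkn : ((k:ℝ)+(n:ℝ)+1) ≠ 0 := by positivity
  push_cast
  field_simp
  ring

lemma Ysum_rec (n : ℕ) (x : ℝ) (hx : x ≠ 0) :
    (∑' k, ydt (n+1) k x) + ((n+1:ℝ)/x) * (∑' k, yt (n+1) k x)
      = (∑' k, yt n k x) + (2/x) * besselJr (n+1) x := by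
  rw [besselJr_eq, ← tsum_mul_left, ← Summable.tsum_add (summable_ydt _ x) ((summable_yt _ x).mul_left _),
      ← tsum_mul_left (a := (2:ℝ)/x),
      ← Summable.tsum_add (summable_yt n x) ((summable_jt (n+1) x).mul_left _)]
  exact tsum_congr (fun k => yt_rec n k x hx)

lemma deriv_besselYr_rec1 (n : ℕ) (x : ℝ) (hx : 0 < x) :
    deriv (besselYr (n+1)) x = besselYr n x - ((n+1:ℝ)/x) * besselYr (n+1) x := by
  rw [(hasDerivAt_besselYr (n+1) x hx).deriv, deriv_besselJr_rec1 n x hx.ne']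
  have hp := Psum_rec n x hx.ne'
  have ht := Ysum_rec n x hx.ne'
  rw [besselYr_eq n, besselYr_eq (n+1)]
  have hpi : Real.pi ≠ 0 := Real.pi_ne_zero
  linear_combination (-(1/Real.pi)) * hp - (1/Real.pi) * ht

lemma main_algebra (n : ℕ) (a ρ lam μ b Jx J1y Jny Y1y Yny : ℝ)
    (hμ : μ ≠ 0) (hρ : ρ ≠ 0) (hlam : lam ≠ 0) (hb : b ≠ 0) (ha : a ≠ 0)
    (hden : (J1y + (-(lam/μ) * Jx / b) * (Jny - ((n+1:ℝ)/(lam*ρ)) * J1y))^2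
          + (Y1y + (-(lam/μ) * Jx / b) * (Yny - ((n+1:ℝ)/(lam*ρ)) * Y1y))^2 ≠ 0) :
    -(a^2/μ^2) * (2/(Real.pi^2*lam)) * (1 - (((n:ℝ)+1)^2/(lam*ρ)^2) * (-(lam/μ) * Jx / b)^2)
        / ((J1y + (-(lam/μ) * Jx / b) * (Jny - ((n+1:ℝ)/(lam*ρ)) * J1y))^2
          + (Y1y + (-(lam/μ) * Jx / b) * (Yny - ((n+1:ℝ)/(lam*ρ)) * Y1y))^2)
      = (2*a^2/(Real.pi^2*lam)) * (b + ((n+1:ℝ)/(μ*ρ)) * Jx)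
          * (((n+1:ℝ)/(μ*ρ)) * Jx - b)
          / ((μ * (b + ((n+1:ℝ)/(μ*ρ)) * Jx) * J1y - lam * Jx * Jny)^2
            + (μ * (b + ((n+1:ℝ)/(μ*ρ)) * Jx) * Y1y - lam * Jx * Yny)^2) := by
  have hpi : Real.pi ≠ 0 := Real.pi_ne_zero
  set D2 := (J1y + (-(lam/μ) * Jx / b) * (Jny - ((n+1:ℝ)/(lam*ρ)) * J1y))^2
          + (Y1y + (-(lam/μ) * Jx / b) * (Yny - ((n+1:ℝ)/(lam*ρ)) * Y1y))^2 with hD2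
  set D1 := (μ * (b + ((n+1:ℝ)/(μ*ρ)) * Jx) * J1y - lam * Jx * Jny)^2
            + (μ * (b + ((n+1:ℝ)/(μ*ρ)) * Jx) * Y1y - lam * Jx * Yny)^2 with hD1
  have key : D1 = (μ*b)^2 * D2 := by
    rw [hD1, hD2]
    field_simp
    ring
  have hD2ne : D2 ≠ 0 := hden
  have hD1ne : D1 ≠ 0 := by
    rw [key]
    exact mul_ne_zero (pow_ne_zero _ (mul_ne_zero hμ hb)) hD2ne
  rw [div_eq_div_iff hD2ne hD1ne, key]
  field_simp
  ring
/-- alternate expression for `σ'_ℓ(λ)`, `ℓ ≥ 1`. -/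
theorem stmt_10 (ℓ : ℕ) (hℓ : 1 ≤ ℓ) (a ρ lam : ℝ) (ha : 0 < a) (hρ : 0 < ρ)
    (hlam : 0 < lam)
    (μ : ℝ) (hμ : μ = Real.sqrt (lam^2 + a^2))
    (hJ' : deriv (besselJr ℓ) (μ*ρ) ≠ 0)
    (A : ℝ) (hA : A = -(lam/μ) * besselJr ℓ (μ*ρ) / deriv (besselJr ℓ) (μ*ρ))
    (hden : (besselJr ℓ (lam*ρ) + A * deriv (besselJr ℓ) (lam*ρ))^2
        + (besselYr ℓ (lam*ρ) + A * deriv (besselYr ℓ) (lam*ρ))^2 ≠ 0) :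
    -(a^2/μ^2) * (2/(Real.pi^2*lam)) * (1 - ((ℓ:ℝ)^2/(lam*ρ)^2) * A^2)
        / ((besselJr ℓ (lam*ρ) + A * deriv (besselJr ℓ) (lam*ρ))^2
          + (besselYr ℓ (lam*ρ) + A * deriv (besselYr ℓ) (lam*ρ))^2)
      = (2*a^2/(Real.pi^2*lam)) * besselJr (ℓ-1) (μ*ρ) * besselJr (ℓ+1) (μ*ρ)
          / Dfun a ρ ℓ lam := by
  obtain ⟨n, rfl⟩ : ∃ n, ℓ = n+1 := ⟨ℓ-1, by omega⟩
  have hμpos : 0 < μ := by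
    rw [hμ]; exact Real.sqrt_pos.mpr (by positivity)
  have hxpos : (0:ℝ) < μ*ρ := by positivity
  have hypos : (0:ℝ) < lam*ρ := by positivity
  subst hA
  rw [deriv_besselJr_rec1 n (lam*ρ) hypos.ne', deriv_besselYr_rec1 n (lam*ρ) hypos] at hden ⊢
  simp only [Dfun, Nat.add_sub_cancel] at *
  rw [← hμ]
  have hb1 : besselJr n (μ*ρ) = deriv (besselJr (n+1)) (μ*ρ)
      + ((n+1:ℝ)/(μ*ρ)) * besselJr (n+1) (μ*ρ) := by
    have := deriv_besselJr_rec1 n (μ*ρ) hxpos.ne'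
    linarith
  have hb2 : besselJr (n+2) (μ*ρ) = ((n+1:ℝ)/(μ*ρ)) * besselJr (n+1) (μ*ρ)
      - deriv (besselJr (n+1)) (μ*ρ) := by
    have := deriv_besselJr_rec2 n (μ*ρ) hxpos.ne'
    linarith
  rw [show n+1+1 = n+2 from by omega, hb1, hb2]
  push_cast at hden ⊢
  exact main_algebra n a ρ lam μ _ _ _ _ _ _ hμpos.ne' hρ.ne' hlam.ne' hJ' ha.ne' hden
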